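/- For conservative k-of-n testing, the expected cost of strategy T_k(π) given by permutation π with costs c_i equals ∑_{j=1}^n c_{π(j)}·P(∑_{ℓ=1}^{j-1}(1-x_{π(ℓ)}) ≤ k-1), and this is minimized over permutations π by ordering tests in increasing order of c_i/(1-p_i). -/

import Mathlib

open Finset

noncomputable def wt {n : ℕ} (p : Fin n → ℝ) (x : Fin n → Bool) : ℝ :=
  ∏ i, if x i then p i else 1 - p i

open scoped Classical in
/-- Probability of an event under the product Bernoulli distribution with parameters `p`. -/
noncomputable def pr {n : ℕ} (p : Fin n → ℝ) (E : (Fin n → Bool) → Prop) : ℝ :=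
  ∑ x ∈ Finset.univ.filter E, wt p x

/-- Number of zeros (failed tests) in an outcome vector. -/
def zeros {n : ℕ} (x : Fin n → Bool) : ℕ := ∑ i, if x i then 0 else 1

/-- Binary decision trees over `n` tests. -/
inductive DTree (n : ℕ) : Type
  | leaf (b : Bool) : DTree n
  | node (i : Fin n) (l r : DTree n) : DTree n

def DTree.eval {n : ℕ} : DTree n → (Fin n → Bool) → Bool
  | .leaf b, _ => b
  | .node i l r, x => if x i then DTree.eval r x else DTree.eval l x

/-- The set of tests performed on item `x` by strategy `T`. -/
def DTree.tests {n : ℕ} : DTree n → (Fin n → Bool) → Finset (Fin n)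
  | .leaf _, _ => ∅
  | .node i l r, x => insert i (if x i then DTree.tests r x else DTree.tests l x)

/-- The number of tests (path length) performed on item `x` by strategy `T`. -/
def DTree.depthOn {n : ℕ} : DTree n → (Fin n → Bool) → ℕ
  | .leaf _, _ => 0
  | .node i l r, x => (if x i then DTree.depthOn r x else DTree.depthOn l x) + 1

/-- `gprob p T i` : probability that test `i` is performed on a random item under strategy `T`. -/
noncomputable def gprob {n : ℕ} (p : Fin n → ℝ) (T : DTree n) (i : Fin n) : ℝ :=
  pr p (fun x => i ∈ T.tests x)

/-- A conservative `k`-of-`n` strategy: tests along each path are distinct, the strategy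
computes the `k`-of-`n` function, items with fewer than `k` zeros undergo all `n` tests,
and items with at least `k` zeros are tested exactly until `k` zeros are observed. -/
def Conservative {n : ℕ} (k : ℕ) (T : DTree n) : Prop :=
  (∀ x, T.depthOn x = (T.tests x).card) ∧
  (∀ x : Fin n → Bool, T.eval x = decide (zeros x < k)) ∧
  (∀ x, zeros x < k → T.tests x = Finset.univ) ∧
  (∀ x, k ≤ zeros x → ((T.tests x).filter (fun i => x i = false)).card = k)

/-- The conservative strategy that performs the listed tests in order until `k` zeros
have been observed or the list is exhausted. -/
def permTree (n : ℕ) : ℕ → List (Fin n) → DTree n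
  | 0, _ => .leaf false
  | _ + 1, [] => .leaf true
  | k + 1, i :: rest => .node i (permTree n k rest) (permTree n (k + 1) rest)

/-- The conservative `k`-of-`n` strategy following the order `π 0, π 1, …`. -/
def permStrat {n : ℕ} (k : ℕ) (π : Equiv.Perm (Fin n)) : DTree n :=
  permTree n k ((List.finRange n).map π)

open scoped Classical

lemma pr_eq_sum_ite {n} (p : Fin n → ℝ) (E : (Fin n → Bool) → Prop) :
    pr p E = ∑ x : Fin n → Bool, if E x then wt p x else 0 := by
  rw [pr, Finset.sum_filter]

lemma pr_congr {n} (p : Fin n → ℝ) {E E' : (Fin n → Bool) → Prop} (h : ∀ x, E x ↔ E' x) :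
    pr p E = pr p E' := by
  have : E = E' := funext fun x => propext (h x)
  rw [this]

lemma wt_pos {n} {p : Fin n → ℝ} (hp : ∀ i, 0 < p i ∧ p i < 1) (x : Fin n → Bool) :
    0 < wt p x := by
  refine Finset.prod_pos fun i _ => ?_
  rcases hp i with ⟨h1, h2⟩
  cases hxi : x i <;> simp <;> linarith

lemma pr_nonneg {n} {p : Fin n → ℝ} (hp : ∀ i, 0 < p i ∧ p i < 1)
    (E : (Fin n → Bool) → Prop) : 0 ≤ pr p E :=
  Finset.sum_nonneg fun x _ => (wt_pos hp x).le

lemma wt_update {n} (p : Fin n → ℝ) (x : Fin n → Bool) (a : Fin n) (b : Bool) :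
    wt p (Function.update x a b)
      = (if b then p a else 1 - p a) * ∏ i ∈ univ.erase a, (if x i then p i else 1 - p i) := by
  unfold wt
  have h : (fun i => if Function.update x a b i then p i else 1 - p i)
      = Function.update (fun i => if x i then p i else 1 - p i) a (if b then p a else 1 - p a) := by
    funext i
    by_cases h : i = a
    · subst h; simp
    · simp [Function.update_of_ne h]
  calc (∏ i, if Function.update x a b i then p i else 1 - p i)
      = ∏ i, Function.update (fun i => if x i then p i else 1 - p i) a
          (if b then p a else 1 - p a) i :=
        Finset.prod_congr rfl (fun i _ => congrFun h i)
    _ = _ := by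
        rw [Finset.prod_update_of_mem (Finset.mem_univ a)]
        rw [Finset.sdiff_singleton_eq_erase]

lemma wt_erase {n} (p : Fin n → ℝ) (x : Fin n → Bool) (a : Fin n) :
    wt p x = (if x a then p a else 1 - p a) * ∏ i ∈ univ.erase a, (if x i then p i else 1 - p i) :=
  (Finset.mul_prod_erase univ _ (Finset.mem_univ a)).symm

lemma pr_and_false {n} (p : Fin n → ℝ) (hp : ∀ i, 0 < p i ∧ p i < 1) (a : Fin n)
    (E : (Fin n → Bool) → Prop) (hE : ∀ x b, E (Function.update x a b) ↔ E x) :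
    pr p (fun x => E x ∧ x a = false) = (1 - p a) * pr p E := by
  have split : pr p E
      = pr p (fun x => E x ∧ x a = false) + pr p (fun x => E x ∧ x a = true) := by
    rw [pr_eq_sum_ite, pr_eq_sum_ite, pr_eq_sum_ite, ← Finset.sum_add_distrib]
    refine Finset.sum_congr rfl fun x _ => ?_
    by_cases hEx : E x <;> cases hxa : x a <;> simp [hEx, hxa]
  have hinv : Function.Involutive (fun x : Fin n → Bool => Function.update x a (!x a)) := by
    intro x
    funext i
    by_cases h : i = a
    · subst h; simp
    · simp [Function.update_of_ne h]
  have flip : (1 - p a) * pr p (fun x => E x ∧ x a = true)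
      = p a * pr p (fun x => E x ∧ x a = false) := by
    rw [pr, pr, Finset.mul_sum, Finset.mul_sum]
    refine Finset.sum_nbij' (fun x => Function.update x a false)
      (fun x => Function.update x a true) ?_ ?_ ?_ ?_ ?_
    · intro x hx
      simp only [Finset.mem_filter, Finset.mem_univ, true_and] at hx ⊢
      exact ⟨(hE x false).2 hx.1, Function.update_self a false x⟩
    · intro x hx
      simp only [Finset.mem_filter, Finset.mem_univ, true_and] at hx ⊢
      exact ⟨(hE x true).2 hx.1, Function.update_self a true x⟩
    · intro x hx
      simp only [Finset.mem_filter, Finset.mem_univ, true_and] at hx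
      funext i
      by_cases h : i = a
      · subst h; simp [hx.2]
      · simp [Function.update_of_ne h]
    · intro x hx
      simp only [Finset.mem_filter, Finset.mem_univ, true_and] at hx
      funext i
      by_cases h : i = a
      · subst h; simp [hx.2]
      · simp [Function.update_of_ne h]
    · intro x hx
      simp only [Finset.mem_filter, Finset.mem_univ, true_and] at hx
      rw [wt_update, wt_erase p x a, hx.2]
      simp; ring
  linear_combination (p a - 1) * split - flip

def Zc {n : ℕ} (S : Finset (Fin n)) (x : Fin n → Bool) : ℕ :=
  ∑ i ∈ S, if x i then 0 else 1

lemma Zc_update {n} (S : Finset (Fin n)) {a : Fin n} (ha : a ∉ S) (x : Fin n → Bool) (b : Bool) :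
    Zc S (Function.update x a b) = Zc S x := by
  refine Finset.sum_congr rfl fun i hi => ?_
  rw [Function.update_of_ne (by rintro rfl; exact ha hi)]

lemma F_insert {n} (p : Fin n → ℝ) (hp : ∀ i, 0 < p i ∧ p i < 1) {a : Fin n}
    {S : Finset (Fin n)} (ha : a ∉ S) (m : ℕ) :
    pr p (fun x => Zc (insert a S) x ≤ m)
      = pr p (fun x => Zc S x ≤ m) - (1 - p a) * pr p (fun x => Zc S x = m) := by
  have h1 : pr p (fun x => Zc (insert a S) x ≤ m)
      = pr p (fun x => Zc S x ≤ m) - pr p (fun x => Zc S x = m ∧ x a = false) := by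
    rw [pr_eq_sum_ite, pr_eq_sum_ite, pr_eq_sum_ite, ← Finset.sum_sub_distrib]
    refine Finset.sum_congr rfl fun x _ => ?_
    have hz : Zc (insert a S) x = (if x a then 0 else 1) + Zc S x := Finset.sum_insert ha
    cases hxa : x a
    · rw [hxa] at hz; simp only [Bool.false_eq_true, if_false] at hz
      simp only [hxa, eq_self_iff_true, and_true]
      rw [hz]
      split_ifs
      all_goals first | ring1 | (exfalso; omega)
    · rw [hxa] at hz; simp at hz
      simp only [hxa, Bool.true_eq_false, and_false]
      rw [hz, if_neg not_false]
      split_ifs with h1 <;> ring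
  rw [h1, pr_and_false p hp a _ (fun x b => by rw [Zc_update S ha])]

lemma mem_tests_permTree {n : ℕ} (x : Fin n → Bool) (j : Fin n) :
    ∀ (A : List (Fin n)) (k : ℕ) (B : List (Fin n)), j ∉ A →
      (j ∈ (permTree n k (A ++ j :: B)).tests x
        ↔ A.countP (fun i => x i = false) < k) := by
  intro A
  induction A with
  | nil =>
    intro k B _
    cases k with
    | zero => simp [permTree, DTree.tests]
    | succ k => simp [permTree, DTree.tests]
  | cons i A' ih =>
    intro k B hA
    have hij : j ≠ i := by
      intro h; exact hA (by simp [h])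
    have hA' : j ∉ A' := fun h => hA (by simp [h])
    cases k with
    | zero => simp [permTree, DTree.tests]
    | succ k =>
      simp only [List.cons_append, permTree, DTree.tests, Finset.mem_insert, List.countP_cons]
      cases hxi : x i
      · simp only [hxi, Bool.false_eq_true, if_false]
        rw [if_pos (by simp [hxi])]
        constructor
        · rintro (h | h)
          · exact absurd h hij
          · have := (ih k B hA').1 h; omega
        · intro h; exact Or.inr ((ih k B hA').2 (by omega))
      · simp only [hxi, if_true]
        rw [if_neg (by simp [hxi])]
        constructor
        · rintro (h | h)
          · exact absurd h hij
          · have := (ih (k+1) B hA').1 h; omega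
        · intro h; exact Or.inr ((ih (k+1) B hA').2 (by omega))

lemma finRange_split {n : ℕ} (j : Fin n) :
    List.finRange n = (List.finRange n).take j ++ j :: (List.finRange n).drop (j + 1) := by
  conv_lhs => rw [← List.take_append_drop (j : ℕ) (List.finRange n)]
  congr 1
  rw [List.drop_eq_getElem_cons (by simp [j.isLt])]
  congr 1
  simp

lemma mem_take_finRange {n : ℕ} {m : ℕ} {ℓ : Fin n} (h : ℓ ∈ (List.finRange n).take m) :
    (ℓ : ℕ) < m := by
  rw [List.mem_iff_getElem] at h
  obtain ⟨i, hi, hg⟩ := h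
  have hlen : i < m := by
    have := hi
    simp [List.length_take] at this
    omega
  rw [List.getElem_take] at hg
  have : (ℓ : ℕ) = i := by rw [← hg]; simp
  omega

lemma countP_take_finRange {n : ℕ} (x : Fin n → Bool) (σ : Equiv.Perm (Fin n)) :
    ∀ m : ℕ, m ≤ n →
      (((List.finRange n).take m).map σ).countP (fun i => x i = false)
        = ∑ ℓ ∈ univ.filter (fun ℓ : Fin n => (ℓ : ℕ) < m), (if x (σ ℓ) then 0 else 1) := by
  intro m
  induction m with
  | zero => simp
  | succ m ih =>
    intro hm
    have hm' : m < n := hm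
    have hms : m ≤ n := hm'.le
    rw [List.take_succ]
    have hg : (List.finRange n)[m]? = some ⟨m, hm'⟩ := by
      rw [List.getElem?_eq_getElem (by simp [hm'])]
      simp
    rw [hg]
    rw [List.map_append, List.countP_append]
    have hfil : (univ.filter (fun ℓ : Fin n => (ℓ : ℕ) < m + 1))
        = insert ⟨m, hm'⟩ (univ.filter (fun ℓ : Fin n => (ℓ : ℕ) < m)) := by
      ext ℓ
      simp only [Finset.mem_filter, Finset.mem_univ, true_and, Finset.mem_insert, Fin.ext_iff]
      omega
    rw [hfil, Finset.sum_insert (by simp)]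
    rw [ih hms]
    cases hxm : x (σ ⟨m, hm'⟩) <;> simp [hxm, Nat.add_comm]

lemma tests_event {n k : ℕ} (hk : 1 ≤ k) (σ : Equiv.Perm (Fin n)) (j : Fin n)
    (x : Fin n → Bool) :
    σ j ∈ ((permStrat k σ).tests x)
      ↔ (∑ ℓ ∈ Finset.univ.filter (fun ℓ => ℓ < j), if x (σ ℓ) then 0 else 1) ≤ k - 1 := by
  have hsplit : (List.finRange n).map σ
      = ((List.finRange n).take j).map σ ++ σ j :: ((List.finRange n).drop ((j : ℕ) + 1)).map σ := by
    conv_lhs => rw [finRange_split j]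
    rw [List.map_append, List.map_cons]
  have hnot : σ j ∉ ((List.finRange n).take j).map σ := by
    intro h
    rw [List.mem_map] at h
    obtain ⟨ℓ, hℓ, he⟩ := h
    have h1 := mem_take_finRange hℓ
    have h2 : ℓ = j := σ.injective he
    rw [h2] at h1; omega
  have hfil : (Finset.univ.filter (fun ℓ : Fin n => ℓ < j))
      = Finset.univ.filter (fun ℓ : Fin n => (ℓ : ℕ) < (j : ℕ)) := by
    ext ℓ
    simp only [Finset.mem_filter, Finset.mem_univ, true_and]
    exact Fin.lt_iff_val_lt_val
  rw [permStrat, hsplit, mem_tests_permTree x (σ j) _ k _ hnot,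
    countP_take_finRange x σ (j : ℕ) j.isLt.le, hfil]
  omega

lemma part1 {n k : ℕ} (hk : 1 ≤ k) (p c : Fin n → ℝ) (σ : Equiv.Perm (Fin n)) :
    ∑ x : Fin n → Bool, wt p x * ∑ i ∈ (permStrat k σ).tests x, c i
      = ∑ j : Fin n, c (σ j) *
          pr p (fun x => (∑ ℓ ∈ Finset.univ.filter (fun ℓ => ℓ < j),
            if x (σ ℓ) then 0 else 1) ≤ k - 1) := by
  have step1 : ∑ x : Fin n → Bool, wt p x * ∑ i ∈ (permStrat k σ).tests x, c i
      = ∑ x : Fin n → Bool, ∑ i : Fin n,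
          (if i ∈ (permStrat k σ).tests x then wt p x * c i else 0) := by
    refine Finset.sum_congr rfl fun x _ => ?_
    rw [Finset.mul_sum]
    rw [show (∑ i ∈ (permStrat k σ).tests x, wt p x * c i)
        = ∑ i ∈ univ ∩ (permStrat k σ).tests x, wt p x * c i from by
      rw [Finset.univ_inter]]
    rw [← Finset.sum_ite_mem]
  rw [step1, Finset.sum_comm]
  have step2 : ∀ i : Fin n,
      (∑ x : Fin n → Bool, if i ∈ (permStrat k σ).tests x then wt p x * c i else 0)
        = c i * pr p (fun x => i ∈ (permStrat k σ).tests x) := by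
    intro i
    rw [pr_eq_sum_ite, Finset.mul_sum]
    refine Finset.sum_congr rfl fun x _ => ?_
    by_cases h : i ∈ (permStrat k σ).tests x <;> simp [h] <;> ring
  rw [Finset.sum_congr rfl fun i _ => step2 i]
  rw [← Equiv.sum_comp σ (fun i => c i * pr p (fun x => i ∈ (permStrat k σ).tests x))]
  refine Finset.sum_congr rfl fun j _ => ?_
  congr 1
  exact pr_congr p (fun x => tests_event hk σ j x)

def pre {n : ℕ} (j : Fin n) : Finset (Fin n) := univ.filter (fun ℓ => ℓ < j)

noncomputable def Fk {n : ℕ} (p : Fin n → ℝ) (k : ℕ) (S : Finset (Fin n)) : ℝ :=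
  pr p (fun x => Zc S x ≤ k - 1)

noncomputable def Gk {n : ℕ} (p : Fin n → ℝ) (k : ℕ) (S : Finset (Fin n)) : ℝ :=
  pr p (fun x => Zc S x = k - 1)

noncomputable def cost {n : ℕ} (p c : Fin n → ℝ) (k : ℕ) (σ : Equiv.Perm (Fin n)) : ℝ :=
  ∑ j : Fin n, c (σ j) * Fk p k ((pre j).image σ)

lemma cost_eq {n k : ℕ} (p c : Fin n → ℝ) (σ : Equiv.Perm (Fin n)) :
    ∑ j : Fin n, c (σ j) *
        pr p (fun x => (∑ ℓ ∈ Finset.univ.filter (fun ℓ => ℓ < j),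
          if x (σ ℓ) then 0 else 1) ≤ k - 1)
      = cost p c k σ := by
  refine Finset.sum_congr rfl fun j _ => ?_
  congr 1
  refine pr_congr p fun x => ?_
  have : Zc ((pre j).image σ) x = ∑ ℓ ∈ Finset.univ.filter (fun ℓ => ℓ < j),
      if x (σ ℓ) then 0 else 1 := by
    rw [Zc, Finset.sum_image (fun a _ b _ h => σ.injective h)]
    rfl
  rw [this]

lemma image_swap_filter_lt {n : ℕ} (u v j : Fin n) (hu : u < j) (hv : v < j) :
    (pre j).image (Equiv.swap u v) = pre j := by
  ext y
  simp only [pre, Finset.mem_image, Finset.mem_filter, Finset.mem_univ, true_and]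
  constructor
  · rintro ⟨ℓ, hℓ, rfl⟩
    rw [Equiv.swap_apply_def]
    split_ifs <;> assumption
  · intro hy
    refine ⟨Equiv.swap u v y, ?_, Equiv.swap_apply_self _ _ _⟩
    rw [Equiv.swap_apply_def]
    split_ifs <;> assumption

lemma cost_swap {n k : ℕ} (p c : Fin n → ℝ) (hp : ∀ i, 0 < p i ∧ p i < 1)
    (σ : Equiv.Perm (Fin n)) (u v : Fin n) (hadj : (u : ℕ) + 1 = (v : ℕ))
    (hr : c (σ v) * (1 - p (σ u)) ≤ c (σ u) * (1 - p (σ v))) :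
    cost p c k (σ * Equiv.swap u v) ≤ cost p c k σ := by
  set σ' := σ * Equiv.swap u v with hσ'
  have hune : u ≠ v := Fin.ne_of_val_ne (by omega)
  have hvnu : v ≠ u := fun h => hune h.symm
  have hsu : σ' u = σ v := by
    rw [hσ', Equiv.Perm.mul_apply, Equiv.swap_apply_left]
  have hsv : σ' v = σ u := by
    rw [hσ', Equiv.Perm.mul_apply, Equiv.swap_apply_right]
  have hfix : ∀ j, j ≠ u → j ≠ v → σ' j = σ j := by
    intro j h1 h2
    rw [hσ', Equiv.Perm.mul_apply, Equiv.swap_apply_of_ne_of_ne h1 h2]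
  have hSlow : ∀ j : Fin n, (j : ℕ) ≤ (u : ℕ) → (pre j).image σ' = (pre j).image σ := by
    intro j hj
    refine Finset.image_congr fun ℓ hℓ => ?_
    have hℓ' : (ℓ : ℕ) < (j : ℕ) := by
      have h : ℓ ∈ pre j := hℓ
      exact (Finset.mem_filter.1 h).2
    exact hfix ℓ (Fin.ne_of_val_ne (by omega)) (Fin.ne_of_val_ne (by omega))
  have hS : ∀ j, j ≠ u → j ≠ v → (pre j).image σ' = (pre j).image σ := by
    intro j h1 h2
    have h1' := Fin.val_ne_of_ne h1
    have h2' := Fin.val_ne_of_ne h2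
    have : (j : ℕ) < (u : ℕ) ∨ (v : ℕ) < (j : ℕ) := by omega
    rcases this with h | h
    · exact hSlow j h.le
    · have h2 : (pre j).image ⇑σ' = ((pre j).image (Equiv.swap u v)).image σ := by
        rw [Finset.image_image]; rfl
      rw [h2, image_swap_filter_lt u v j (by rw [Fin.lt_iff_val_lt_val]; omega)
        (by rw [Fin.lt_iff_val_lt_val]; omega)]
  set S := (pre u).image σ with hSdef
  have hSu : (pre u).image σ' = S := hSlow u le_rfl
  have hpresv : pre v = insert u (pre u) := by
    ext ℓ
    simp only [pre, Finset.mem_filter, Finset.mem_univ, true_and, Finset.mem_insert,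
      Fin.lt_iff_val_lt_val, Fin.ext_iff]
    omega
  have hnotmem : ∀ w : Fin n, ¬ (w : ℕ) < (u : ℕ) → σ w ∉ S := by
    intro w hw hmem
    rw [hSdef, Finset.mem_image] at hmem
    obtain ⟨ℓ, hℓ, he⟩ := hmem
    simp only [pre, Finset.mem_filter, Finset.mem_univ, true_and,
      Fin.lt_iff_val_lt_val] at hℓ
    have : ℓ = w := σ.injective he
    rw [this] at hℓ; omega
  have haS : σ u ∉ S := hnotmem u (by omega)
  have hbS : σ v ∉ S := hnotmem v (by omega)
  have hSv : (pre v).image σ = insert (σ u) S := by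
    rw [hpresv, Finset.image_insert]
  have hSv' : (pre v).image σ' = insert (σ v) S := by
    rw [hpresv, Finset.image_insert, hsu, hSu]
  have expand : ∀ τ : Equiv.Perm (Fin n), cost p c k τ
      = c (τ u) * Fk p k ((pre u).image τ)
        + (c (τ v) * Fk p k ((pre v).image τ)
          + ∑ j ∈ (univ.erase u).erase v, c (τ j) * Fk p k ((pre j).image τ)) := by
    intro τ
    rw [cost, ← Finset.add_sum_erase _ _ (Finset.mem_univ u)]
    congr 1
    rw [← Finset.add_sum_erase _ _ (Finset.mem_erase.2 ⟨hvnu, Finset.mem_univ v⟩)]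
  have tail : ∑ j ∈ (univ.erase u).erase v, c (σ' j) * Fk p k ((pre j).image σ')
      = ∑ j ∈ (univ.erase u).erase v, c (σ j) * Fk p k ((pre j).image σ) := by
    refine Finset.sum_congr rfl fun j hj => ?_
    simp only [Finset.mem_erase] at hj
    rw [hfix j hj.2.1 hj.1, hS j hj.2.1 hj.1]
  rw [expand σ', expand σ, hsu, hsv, hSu, hSv, hSv', tail]
  have hFa : Fk p k (insert (σ u) S) = Fk p k S - (1 - p (σ u)) * Gk p k S :=
    F_insert p hp haS (k - 1)
  have hFb : Fk p k (insert (σ v) S) = Fk p k S - (1 - p (σ v)) * Gk p k S :=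
    F_insert p hp hbS (k - 1)
  rw [hFa, hFb]
  have hG : 0 ≤ Gk p k S := pr_nonneg hp _
  nlinarith [hG, hr]

def InvSet {n : ℕ} (ρ : Equiv.Perm (Fin n)) : Finset (Fin n × Fin n) :=
  univ.filter (fun q => q.1 < q.2 ∧ ρ q.2 < ρ q.1)

lemma swap_lt {n : ℕ} {u v : Fin n} (hadj : (u : ℕ) + 1 = (v : ℕ)) {i j : Fin n}
    (hij : i < j) (hne : ¬(i = u ∧ j = v)) :
    Equiv.swap u v i < Equiv.swap u v j := by
  have hij' : (i : ℕ) < (j : ℕ) := hij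
  by_cases h1 : i = u
  · have h1' := congrArg Fin.val h1
    by_cases h2 : j = v
    · exact absurd ⟨h1, h2⟩ hne
    · have h2' := Fin.val_ne_of_ne h2
      have hju : j ≠ u := Fin.ne_of_val_ne (by omega)
      have hju' := Fin.val_ne_of_ne hju
      rw [h1, Equiv.swap_apply_left, Equiv.swap_apply_of_ne_of_ne hju h2]
      exact Fin.lt_iff_val_lt_val.mpr (by omega)
  · have h1' := Fin.val_ne_of_ne h1
    by_cases h3 : i = v
    · have h3' := congrArg Fin.val h3
      have hju : j ≠ u := Fin.ne_of_val_ne (by omega)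
      have hjv : j ≠ v := Fin.ne_of_val_ne (by omega)
      have hju' := Fin.val_ne_of_ne hju
      have hjv' := Fin.val_ne_of_ne hjv
      rw [h3, Equiv.swap_apply_right, Equiv.swap_apply_of_ne_of_ne hju hjv]
      exact Fin.lt_iff_val_lt_val.mpr (by omega)
    · have h3' := Fin.val_ne_of_ne h3
      rw [Equiv.swap_apply_of_ne_of_ne h1 h3]
      by_cases h4 : j = u
      · have h4' := congrArg Fin.val h4
        rw [h4, Equiv.swap_apply_left]
        exact Fin.lt_iff_val_lt_val.mpr (by omega)
      · have h4' := Fin.val_ne_of_ne h4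
        by_cases h5 : j = v
        · have h5' := congrArg Fin.val h5
          rw [h5, Equiv.swap_apply_right]
          exact Fin.lt_iff_val_lt_val.mpr (by omega)
        · have h5' := Fin.val_ne_of_ne h5
          rw [Equiv.swap_apply_of_ne_of_ne h4 h5]
          exact hij

lemma inv_card_swap {n : ℕ} (ρ : Equiv.Perm (Fin n)) (u v : Fin n)
    (hadj : (u : ℕ) + 1 = (v : ℕ)) (hlt : ρ v < ρ u) :
    (InvSet (ρ * Equiv.swap u v)).card < (InvSet ρ).card := by
  have huv : u < v := Fin.lt_iff_val_lt_val.mpr (by omega)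
  have hmem : (u, v) ∈ InvSet ρ := by simp [InvSet, huv, hlt]
  have hcard : (InvSet (ρ * Equiv.swap u v)).card = ((InvSet ρ).erase (u, v)).card := by
    refine Finset.card_bij' (fun q _ => (Equiv.swap u v q.1, Equiv.swap u v q.2))
      (fun q _ => (Equiv.swap u v q.1, Equiv.swap u v q.2)) ?_ ?_ ?_ ?_
    · intro q hq
      rw [InvSet, Finset.mem_filter] at hq
      simp only [Finset.mem_univ, true_and, Equiv.Perm.mul_apply] at hq
      obtain ⟨h1, h2⟩ := hq
      have hqne : ¬(q.1 = u ∧ q.2 = v) := by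
        rintro ⟨rfl, rfl⟩
        rw [Equiv.swap_apply_left, Equiv.swap_apply_right] at h2
        exact absurd hlt (not_lt.2 h2.le)
      refine Finset.mem_erase.2 ⟨?_, ?_⟩
      · intro hpq
        rw [Prod.ext_iff] at hpq
        obtain ⟨ha, hb⟩ := hpq
        have ha' : q.1 = v := by
          have := congrArg (Equiv.swap u v) ha
          rwa [Equiv.swap_apply_self, Equiv.swap_apply_left] at this
        have hb' : q.2 = u := by
          have := congrArg (Equiv.swap u v) hb
          rwa [Equiv.swap_apply_self, Equiv.swap_apply_right] at this
        rw [ha', hb'] at h1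
        exact absurd huv (not_lt.2 h1.le)
      · simp only [InvSet, Finset.mem_filter, Finset.mem_univ, true_and]
        exact ⟨swap_lt hadj h1 hqne, h2⟩
    · intro q hq
      rw [Finset.mem_erase] at hq
      obtain ⟨hne, hq⟩ := hq
      simp only [InvSet, Finset.mem_filter, Finset.mem_univ, true_and] at hq
      obtain ⟨h1, h2⟩ := hq
      have hqne : ¬(q.1 = u ∧ q.2 = v) := by
        rintro ⟨ha, hb⟩
        exact hne (Prod.ext_iff.2 ⟨ha, hb⟩)
      rw [InvSet, Finset.mem_filter]
      simp only [Finset.mem_univ, true_and, Equiv.Perm.mul_apply, Equiv.swap_apply_self]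
      exact ⟨swap_lt hadj h1 hqne, h2⟩
    · intro q hq
      simp [Equiv.swap_apply_self]
    · intro q hq
      simp [Equiv.swap_apply_self]
  rw [hcard, Finset.card_erase_of_mem hmem]
  have hpos : 0 < (InvSet ρ).card := Finset.card_pos.2 ⟨_, hmem⟩
  omega

lemma perm_eq_one_of_adj {n : ℕ} (ρ : Equiv.Perm (Fin n))
    (h : ∀ u v : Fin n, (u : ℕ) + 1 = (v : ℕ) → ρ u ≤ ρ v) : ρ = 1 := by
  have hmono : Monotone ⇑ρ := by
    cases n with
    | zero => intro a; exact absurd a.isLt (by omega)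
    | succ m =>
      rw [Fin.monotone_iff_le_succ]
      intro i
      exact h i.castSucc i.succ (by simp)
  have hsm : StrictMono ⇑ρ := hmono.strictMono_of_injective ρ.injective
  have hid : ⇑ρ = id := by
    haveI : WellFoundedLT (Fin n) := Finite.to_wellFoundedLT
    refine (hsm.range_inj (strictMono_id (α := Fin n))).1 ?_
    rw [Set.range_id, Set.range_eq_univ]
    exact ρ.surjective
  apply Equiv.ext
  intro x
  exact congrFun hid x

lemma cost_min {n k : ℕ} (p c : Fin n → ℝ) (hp : ∀ i, 0 < p i ∧ p i < 1)
    (π : Equiv.Perm (Fin n))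
    (hsort : ∀ i j : Fin n, i ≤ j →
      c (π i) / (1 - p (π i)) ≤ c (π j) / (1 - p (π j))) :
    ∀ (N : ℕ) (σ : Equiv.Perm (Fin n)), (InvSet (π⁻¹ * σ)).card ≤ N →
      cost p c k π ≤ cost p c k σ := by
  intro N
  induction N with
  | zero =>
    intro σ hN
    have hone : π⁻¹ * σ = 1 := by
      apply perm_eq_one_of_adj
      intro u v hadj
      by_contra hle
      have hlt : (π⁻¹ * σ) v < (π⁻¹ * σ) u := not_le.1 hle
      have hmem : (u, v) ∈ InvSet (π⁻¹ * σ) := by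
        simp only [InvSet, Finset.mem_filter, Finset.mem_univ, true_and]
        exact ⟨Fin.lt_iff_val_lt_val.mpr (by omega), hlt⟩
      have : 0 < (InvSet (π⁻¹ * σ)).card := Finset.card_pos.2 ⟨_, hmem⟩
      omega
    have hσ : σ = π := by
      have h2 := congrArg (fun τ => π * τ) hone
      simpa [← mul_assoc] using h2
    rw [hσ]
  | succ N ih =>
    intro σ hN
    by_cases hmono : ∀ u v : Fin n, (u : ℕ) + 1 = (v : ℕ) → (π⁻¹ * σ) u ≤ (π⁻¹ * σ) v
    · have hone := perm_eq_one_of_adj _ hmono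
      have hσ : σ = π := by
        have h2 := congrArg (fun τ => π * τ) hone
        simpa [← mul_assoc] using h2
      rw [hσ]
    · push_neg at hmono
      obtain ⟨u, v, hadj, hlt⟩ := hmono
      have hr : c (σ v) * (1 - p (σ u)) ≤ c (σ u) * (1 - p (σ v)) := by
        have h1 : π ((π⁻¹ * σ) v) = σ v := by simp
        have h2 : π ((π⁻¹ * σ) u) = σ u := by simp
        have hs := hsort ((π⁻¹ * σ) v) ((π⁻¹ * σ) u) hlt.le
        rw [h1, h2] at hs
        have d1 : 0 < 1 - p (σ v) := by have := hp (σ v); linarith [(hp (σ v)).2]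
        have d2 : 0 < 1 - p (σ u) := by have := hp (σ u); linarith [(hp (σ u)).2]
        exact (div_le_div_iff₀ d1 d2).1 hs
      have hcard := inv_card_swap (π⁻¹ * σ) u v hadj hlt
      refine le_trans (ih (σ * Equiv.swap u v) ?_) (cost_swap p c hp σ u v hadj hr)
      rw [← mul_assoc]
      omega


/-- For conservative k-of-n testing: the expected cost of the strategy following order `σ`
equals `∑ⱼ c_{σ(j)}·P(fewer than k zeros among the first j-1 tests in the order)`, and this
expected cost is minimized over permutations by ordering tests by nondecreasing `cᵢ/(1-pᵢ)`. -/
theorem stmt_13 (n k : ℕ) (hk : 1 ≤ k) (p c : Fin n → ℝ)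
    (hp : ∀ i, 0 < p i ∧ p i < 1) (hc : ∀ i, 0 < c i)
    (π : Equiv.Perm (Fin n))
    (hsort : ∀ i j : Fin n, i ≤ j →
      c (π i) / (1 - p (π i)) ≤ c (π j) / (1 - p (π j))) :
    (∀ σ : Equiv.Perm (Fin n),
      ∑ x : Fin n → Bool, wt p x * ∑ i ∈ (permStrat k σ).tests x, c i
        = ∑ j : Fin n, c (σ j) *
            pr p (fun x => (∑ ℓ ∈ Finset.univ.filter (fun ℓ => ℓ < j),
              if x (σ ℓ) then 0 else 1) ≤ k - 1)) ∧
    (∀ σ : Equiv.Perm (Fin n),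
      ∑ j : Fin n, c (π j) *
          pr p (fun x => (∑ ℓ ∈ Finset.univ.filter (fun ℓ => ℓ < j),
            if x (π ℓ) then 0 else 1) ≤ k - 1)
        ≤ ∑ j : Fin n, c (σ j) *
            pr p (fun x => (∑ ℓ ∈ Finset.univ.filter (fun ℓ => ℓ < j),
              if x (σ ℓ) then 0 else 1) ≤ k - 1)) := by
  constructor
  · intro σ
    exact part1 hk p c σ
  · intro σ
    rw [cost_eq p c π, cost_eq p c σ]
    exact cost_min p c hp π hsort _ σ le_rfl
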